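/- Let κ be an infinite cardinal and B a set. Let F_κ(B) be the set of families x ∈ F_κ^B (where F_κ is the set of cardinals ≤ κ) with support of cardinality ≤ κ, with coordinatewise cardinal summation. Then F_κ(B) is the free κ-monoid on B: for every κ-monoid H and every function f : B → H, there is a unique κ-homomorphism F_κ(B) → H extending f (via the canonical embedding of B as indicator families). -/

import Mathlib

open scoped Classical

universe u v w

/-- A κ-monoid (Definition 2.1 of the paper), with the index cardinal κ modelled
by an (infinite) index type `ι`.  `base` plays the role of the element `0 ∈ κ`. -/
structure KappaMonoid (ι : Type u) (H : Type v) where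
  zero : H
  base : ι
  sum : (ι → H) → H
  /-- (A1) -/
  sum_single : ∀ x : ι → H, (∀ i, i ≠ base → x i = zero) → sum x = x base
  /-- (A2) -/
  sum_flatten : ∀ (x : ι × ι → H) (π : ι × ι ≃ ι),
    sum (fun i => sum fun j => x (i, j)) = sum fun k => x (π.symm k)

namespace KappaMonoid

variable {ι : Type u} {H : Type v}

/-- The family with value `a` at `i`, `b` at `j`, and `0` elsewhere. -/
noncomputable def pairFam (M : KappaMonoid ι H) (i j : ι) (a b : H) : ι → H :=
  fun k => if k = i then a else if k = j then b else M.zero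

/-- The induced binary addition `a + b` on a κ-monoid. -/
noncomputable def add [Nontrivial ι] (M : KappaMonoid ι H) (a b : H) : H :=
  M.sum (M.pairFam M.base (Classical.choose (exists_ne M.base)) a b)

/-- `α·a`, where the cardinal `α` is realized as the cardinality of `s ⊆ ι`:
the κ-sum of the family equal to `a` on `s` and `0` elsewhere. -/
noncomputable def smulSet (M : KappaMonoid ι H) (s : Set ι) (a : H) : H :=
  M.sum fun i => if i ∈ s then a else M.zero

/-- The κ-sum of the subfamily of `x` supported on `s` (padding by `0`). -/
noncomputable def sumOn (M : KappaMonoid ι H) (s : Set ι) (x : ι → H) : H :=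
  M.sum fun i => if i ∈ s then x i else M.zero

end KappaMonoid
/-- The carrier of `F_κ(B)`: families of cardinals `≤ κ = #ι` indexed by `B` whose
support has cardinality `≤ κ`. -/
def FreeKappaCarrier (ι B : Type u) : Type (u + 1) :=
  {f : B → Cardinal.{u} //
    (∀ b, f b ≤ Cardinal.mk ι) ∧ Cardinal.mk {b | f b ≠ 0} ≤ Cardinal.mk ι}

/-- The canonical embedding `ι : B → F_κ(B)`, sending `b` to the indicator family. -/
noncomputable def freeKappaIncl (ι B : Type u) [Infinite ι] (b : B) :
    FreeKappaCarrier ι B :=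
  ⟨fun b' => if b' = b then 1 else 0, by
    constructor
    · intro b'
      dsimp only
      split
      · exact Cardinal.one_le_iff_ne_zero.mpr (Cardinal.mk_ne_zero ι)
      · exact zero_le
    · refine le_trans (Cardinal.mk_le_mk_of_subset (t := {b}) ?_) ?_
      · intro b' hb'
        simp only [Set.mem_setOf_eq] at hb'
        by_contra hne
        simp only [Set.mem_singleton_iff] at hne
        rw [if_neg hne] at hb'
        exact hb' rfl
      · rw [Cardinal.mk_singleton]
        exact Cardinal.one_le_iff_ne_zero.mpr (Cardinal.mk_ne_zero ι)⟩

/-- A κ-homomorphism: a map preserving the neutral element and κ-indexed sums. -/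
def IsKappaHom {ι : Type u} {H : Type v} {K : Type w}
    (M : KappaMonoid ι H) (N : KappaMonoid ι K) (φ : H → K) : Prop :=
  φ M.zero = N.zero ∧ ∀ x : ι → H, φ (M.sum x) = N.sum fun i => φ (x i)

universe u₁ u₂ u₃

section AuxEquiv

/-- Sigma over fibers that are empty except at `i₀`. -/
noncomputable def sigmaAllEmpty {α : Type u₁} (g : α → Type u₂) (i₀ : α)
    (h : ∀ i, i ≠ i₀ → IsEmpty (g i)) : (Σ i, g i) ≃ g i₀ where
  toFun x := if hi : x.1 = i₀ then hi ▸ x.2 else ((h x.1 hi).false x.2).elim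
  invFun a := ⟨i₀, a⟩
  left_inv := by
    rintro ⟨i, a⟩
    by_cases hi : i = i₀
    · subst hi; simp
    · exact ((h i hi).false a).elim
  right_inv a := by simp

def sigmaSubtypeEquiv {α : Type u₁} (p : α → Prop) (g : α → Type u₂)
    (h : ∀ a, ¬ p a → IsEmpty (g a)) : (Σ a : Subtype p, g a.1) ≃ Σ a, g a where
  toFun x := ⟨x.1.1, x.2⟩
  invFun x := ⟨⟨x.1, not_not.mp fun hp => (h x.1 hp).false x.2⟩, x.2⟩
  left_inv := fun ⟨⟨a, ha⟩, v⟩ => rfl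
  right_inv := fun ⟨a, v⟩ => rfl

def mySigmaComm {α : Type u₁} {β : Type u₂} (g : α → β → Type u₃) :
    (Σ a, Σ b, g a b) ≃ Σ b, Σ a, g a b where
  toFun x := ⟨x.2.1, x.1, x.2.2⟩
  invFun x := ⟨x.2.1, x.1, x.2.2⟩
  left_inv := fun ⟨a, b, v⟩ => rfl
  right_inv := fun ⟨b, a, v⟩ => rfl

def sigmaProdEquiv {α : Type u₁} {β : Type u₂} (g : α × β → Type u₃) :
    (Σ i : α, Σ j : β, g (i, j)) ≃ Σ p : α × β, g p where
  toFun x := ⟨(x.1, x.2.1), x.2.2⟩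
  invFun x := ⟨x.1.1, x.1.2, x.2⟩
  left_inv := fun ⟨i, j, v⟩ => rfl
  right_inv := fun ⟨⟨i, j⟩, v⟩ => rfl

def prodSubtypeSndEquiv {α β : Type*} (p : β → Prop) :
    {x : α × β // p x.2} ≃ α × {b : β // p b} where
  toFun x := (x.1.1, ⟨x.1.2, x.2⟩)
  invFun x := ⟨(x.1, x.2.1), x.2.2⟩
  left_inv := fun ⟨⟨a, b⟩, h⟩ => rfl
  right_inv := fun ⟨a, b⟩ => rfl

end AuxEquiv

section AuxCard

lemma cardSum_out {α : Type u} (f : α → Cardinal.{u}) :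
    Cardinal.sum f = Cardinal.mk (Σ i, Quotient.out (f i)) := by
  rw [Cardinal.mk_sigma]
  exact congrArg _ (funext fun i => (Cardinal.mk_out (f i)).symm)

lemma cardSumSingle {α : Type u} (f : α → Cardinal.{u}) (i₀ : α)
    (h : ∀ i, i ≠ i₀ → f i = 0) : Cardinal.sum f = f i₀ := by
  rw [cardSum_out]
  have he : ∀ i, i ≠ i₀ → IsEmpty (Quotient.out (f i)) := fun i hi =>
    Cardinal.mk_eq_zero_iff.mp (by rw [Cardinal.mk_out]; exact h i hi)
  rw [Cardinal.mk_congr (sigmaAllEmpty _ i₀ he), Cardinal.mk_out]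

lemma cardSumFlatten {α : Type u} (g : α × α → Cardinal.{u}) (π : α × α ≃ α) :
    Cardinal.sum (fun i => Cardinal.sum fun j => g (i, j)) =
      Cardinal.sum fun k => g (π.symm k) := by
  calc Cardinal.sum (fun i => Cardinal.sum fun j => g (i, j))
      = Cardinal.sum (fun i => Cardinal.mk (Σ j, Quotient.out (g (i, j)))) := by
        exact congrArg _ (funext fun i => cardSum_out _)
    _ = Cardinal.mk (Σ i, Σ j, Quotient.out (g (i, j))) := (Cardinal.mk_sigma _).symm
    _ = Cardinal.mk (Σ p : α × α, Quotient.out (g p)) := Cardinal.mk_congr (sigmaProdEquiv.{u,u,u} (fun p => Quotient.out (g p)))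
    _ = Cardinal.mk (Σ k, Quotient.out (g (π.symm k))) :=
        (Cardinal.mk_congr (Equiv.sigmaCongrLeft (β := fun p => Quotient.out (g p)) π.symm)).symm
    _ = Cardinal.sum fun k => g (π.symm k) := (cardSum_out _).symm

lemma cardSumIndicator {α : Type u} (P : α → Prop) :
    Cardinal.sum (fun i => if P i then (1 : Cardinal.{u}) else 0) =
      Cardinal.mk (Subtype P) := by
  have h : ∀ i, (if P i then (1 : Cardinal.{u}) else 0) = Cardinal.mk (ULift.{u} (PLift (P i))) := by
    intro i
    by_cases hp : P i
    · haveI : Unique (ULift.{u} (PLift (P i))) := ⟨⟨⟨⟨hp⟩⟩⟩, fun a => rfl⟩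
      simp [hp]
    · rw [if_neg hp]
      exact (Cardinal.mk_eq_zero_iff.mpr ⟨fun a => hp a.down.down⟩).symm
  simp_rw [h]
  rw [← Cardinal.mk_sigma]
  exact Cardinal.mk_congr (Equiv.sigmaULiftPLiftEquivSubtype P)

lemma sumZeroOfAll {α : Type u} (f : α → Cardinal.{u}) (h : ∀ i, f i = 0) :
    Cardinal.sum f = 0 := by
  rw [cardSum_out]
  rw [Cardinal.mk_eq_zero_iff]
  exact ⟨fun x => (Cardinal.mk_eq_zero_iff.mp (by rw [Cardinal.mk_out]; exact h x.1)).false x.2⟩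

lemma prodSelfEquiv (ι : Type u) [Infinite ι] : Nonempty (ι × ι ≃ ι) := by
  rw [← Cardinal.eq, Cardinal.mk_prod, Cardinal.lift_id, Cardinal.mul_eq_self (Cardinal.aleph0_le_mk ι)]

end AuxCard

section MonoidLemmas

namespace KappaMonoid

variable {ι : Type u} {H : Type v} [Infinite ι] (M : KappaMonoid ι H)

lemma sum_const_zero : M.sum (fun _ => M.zero) = M.zero :=
  M.sum_single _ (fun _ _ => rfl)

lemma pad (π : ι × ι ≃ ι) (y : ι → H) :
    M.sum y = M.sum fun k => if (π.symm k).2 = M.base then y (π.symm k).1 else M.zero := by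
  have h1 : ∀ i, M.sum (fun j => if j = M.base then y i else M.zero) = y i := by
    intro i
    rw [M.sum_single _ (fun j hj => if_neg hj), if_pos rfl]
  calc M.sum y
      = M.sum (fun i => M.sum fun j =>
          (fun p : ι × ι => if p.2 = M.base then y p.1 else M.zero) (i, j)) :=
        (congrArg M.sum (funext h1)).symm
    _ = M.sum fun k => if (π.symm k).2 = M.base then y (π.symm k).1 else M.zero :=
        M.sum_flatten (fun p : ι × ι => if p.2 = M.base then y p.1 else M.zero) π

lemma sum_perm (σ : ι ≃ ι) (y : ι → H) : M.sum (fun i => y (σ i)) = M.sum y := by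
  obtain ⟨π⟩ := prodSelfEquiv ι
  rw [M.pad π y, M.pad ((Equiv.prodCongr σ (Equiv.refl ι)).trans π) (fun i => y (σ i))]
  congr 1
  funext k
  simp [Equiv.prodCongr]

end KappaMonoid

/-- For `k` with `(π.symm k) = (u, b)`, project to `u`. -/
def padEquiv {ι : Type u} (π : ι × ι ≃ ι) (b : ι) (U : Set ι) :
    ↥{k | (π.symm k).2 = b ∧ (π.symm k).1 ∈ U} ≃ ↥U where
  toFun k := ⟨(π.symm k.1).1, k.2.2⟩
  invFun s := ⟨π (s.1, b), by simp⟩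
  left_inv := by
    rintro ⟨k, hk⟩
    apply Subtype.ext
    show π ((π.symm k).1, b) = k
    conv_rhs => rw [← π.apply_symm_apply k]
    congr 1
    exact Prod.ext rfl hk.1.symm
  right_inv := by
    rintro ⟨s, hs⟩
    apply Subtype.ext
    show (π.symm (π (s, b))).1 = s
    simp

namespace KappaMonoid

variable {ι : Type u} {H : Type v} [Infinite ι] (M : KappaMonoid ι H)

lemma sum_matching_colarge (y z : ι → H) (S T : Set ι)
    (hy : ∀ i, i ∉ S → y i = M.zero) (hz : ∀ i, i ∉ T → z i = M.zero)
    (θ : ↥S ≃ ↥T) (hθ : ∀ s : ↥S, z (θ s) = y s)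
    (hS : Cardinal.mk ↥Sᶜ = Cardinal.mk ι) (hT : Cardinal.mk ↥Tᶜ = Cardinal.mk ι) :
    M.sum y = M.sum z := by
  obtain ⟨ψ⟩ : Nonempty (↥Sᶜ ≃ ↥Tᶜ) := Cardinal.eq.mp (hS.trans hT.symm)
  set σ : ι ≃ ι :=
    (Equiv.Set.sumCompl S).symm.trans ((θ.sumCongr ψ).trans (Equiv.Set.sumCompl T)) with hσ
  have key : ∀ i, z (σ i) = y i := by
    intro i
    by_cases hi : i ∈ S
    · have h2 : σ i = (θ ⟨i, hi⟩ : ι) := by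
        simp [hσ, Equiv.Set.sumCompl_symm_apply_of_mem hi]
      rw [h2]; exact hθ ⟨i, hi⟩
    · have h2 : σ i = (ψ ⟨i, hi⟩ : ι) := by
        simp [hσ, Equiv.Set.sumCompl_symm_apply_of_notMem hi]
      rw [h2, hz _ (ψ ⟨i, hi⟩).2, hy _ hi]
  calc M.sum y = M.sum (fun i => z (σ i)) := (congrArg M.sum (funext key)).symm
    _ = M.sum z := M.sum_perm σ z

lemma padded_compl_card (π : ι × ι ≃ ι) (S : Set ι) :
    Cardinal.mk ↥({k | (π.symm k).2 = M.base ∧ (π.symm k).1 ∈ S}ᶜ) = Cardinal.mk ι := by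
  apply le_antisymm (Cardinal.mk_set_le _)
  have hsub : {k | (π.symm k).2 ≠ M.base} ⊆
      {k | (π.symm k).2 = M.base ∧ (π.symm k).1 ∈ S}ᶜ := fun k hk hk2 => hk hk2.1
  refine le_trans ?_ (Cardinal.mk_le_mk_of_subset hsub)
  have e1 : {k // (π.symm k).2 ≠ M.base} ≃ {p : ι × ι // p.2 ≠ M.base} :=
    π.symm.subtypeEquiv (fun k => Iff.rfl)
  have hb : Cardinal.mk {j : ι // j ≠ M.base} = Cardinal.mk ι := by
    have h1 := Cardinal.mk_compl_of_infinite ({M.base} : Set ι)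
      (by rw [Cardinal.mk_singleton]
          exact lt_of_lt_of_le Cardinal.one_lt_aleph0 (Cardinal.aleph0_le_mk ι))
    rw [Set.compl_singleton_eq] at h1
    exact h1
  have h2 : Cardinal.mk {k // (π.symm k).2 ≠ M.base} = Cardinal.mk ι := by
    rw [Cardinal.mk_congr (e1.trans (prodSubtypeSndEquiv (α := ι) (fun j => j ≠ M.base))),
      Cardinal.mk_prod, Cardinal.lift_id, Cardinal.lift_id, hb,
      Cardinal.mul_eq_self (Cardinal.aleph0_le_mk ι)]
  exact h2.ge

lemma sum_matching (y z : ι → H) (S T : Set ι)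
    (hy : ∀ i, i ∉ S → y i = M.zero) (hz : ∀ i, i ∉ T → z i = M.zero)
    (θ : ↥S ≃ ↥T) (hθ : ∀ s : ↥S, z (θ s) = y s) :
    M.sum y = M.sum z := by
  obtain ⟨π⟩ := prodSelfEquiv ι
  set y' : ι → H := fun k => if (π.symm k).2 = M.base then y (π.symm k).1 else M.zero with hy'def
  set z' : ι → H := fun k => if (π.symm k).2 = M.base then z (π.symm k).1 else M.zero with hz'def
  set S' : Set ι := {k | (π.symm k).2 = M.base ∧ (π.symm k).1 ∈ S} with hS'def
  set T' : Set ι := {k | (π.symm k).2 = M.base ∧ (π.symm k).1 ∈ T} with hT'def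
  have hyS' : ∀ k, k ∉ S' → y' k = M.zero := by
    intro k hk
    by_cases h2 : (π.symm k).2 = M.base
    · have h3 : (π.symm k).1 ∉ S := fun hmem => hk ⟨h2, hmem⟩
      simp only [hy'def, if_pos h2]
      exact hy _ h3
    · simp only [hy'def, if_neg h2]
  have hzT' : ∀ k, k ∉ T' → z' k = M.zero := by
    intro k hk
    by_cases h2 : (π.symm k).2 = M.base
    · have h3 : (π.symm k).1 ∉ T := fun hmem => hk ⟨h2, hmem⟩
      simp only [hz'def, if_pos h2]
      exact hz _ h3
    · simp only [hz'def, if_neg h2]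
  let θ' : ↥S' ≃ ↥T' := (padEquiv π M.base S).trans (θ.trans (padEquiv π M.base T).symm)
  have hθ' : ∀ s : ↥S', z' (θ' s) = y' s := by
    intro s
    have h1 : (θ' s : ι) = π ((θ ((padEquiv π M.base S) s) : ι), M.base) := rfl
    have h2 : z' (θ' s) = z (θ ((padEquiv π M.base S) s)) := by
      rw [show z' (θ' s) = z' (θ' s : ι) from rfl, h1]
      simp only [hz'def]
      simp
    rw [h2, hθ]
    have h3 : ((padEquiv π M.base S) s : ι) = (π.symm s).1 := rfl
    simp only [hy'def, h3, if_pos s.2.1]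
  calc M.sum y = M.sum y' := M.pad π y
    _ = M.sum z' := M.sum_matching_colarge y' z' S' T' hyS' hzT' θ' hθ'
          (M.padded_compl_card π S) (M.padded_compl_card π T)
    _ = M.sum z := (M.pad π z).symm

/-- The family indexed by `ι` obtained by placing the values `lab a` along the
embedding `e` and `0` elsewhere. -/
noncomputable def famOf {A : Type u} (lab : A → H) (e : A ↪ ι) : ι → H :=
  Function.extend e lab fun _ => M.zero

lemma famOf_apply {A : Type u} (lab : A → H) (e : A ↪ ι) (a : A) :
    M.famOf lab e (e a) = lab a :=
  e.injective.extend_apply _ _ _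

lemma famOf_not_mem {A : Type u} (lab : A → H) (e : A ↪ ι) (i : ι)
    (h : i ∉ Set.range e) : M.famOf lab e i = M.zero :=
  Function.extend_apply' _ _ _ (by simpa [Set.range] using h)

lemma sum_famOf_congr {A A' : Type u} (lab : A → H) (lab' : A' → H)
    (e : A ↪ ι) (e' : A' ↪ ι) (g : A ≃ A') (hg : ∀ a, lab' (g a) = lab a) :
    M.sum (M.famOf lab e) = M.sum (M.famOf lab' e') := by
  apply M.sum_matching _ _ (Set.range e) (Set.range e')
    (fun i h => M.famOf_not_mem lab e i h) (fun i h => M.famOf_not_mem lab' e' i h)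
    ((Equiv.ofInjective e e.injective).symm.trans
      (g.trans (Equiv.ofInjective e' e'.injective)))
  intro s
  set a := (Equiv.ofInjective e e.injective).symm s with ha
  have h1 : (((Equiv.ofInjective e e.injective).symm.trans
      (g.trans (Equiv.ofInjective e' e'.injective))) s : ι) = e' (g a) := rfl
  have h2 : (s : ι) = e a := (Equiv.apply_ofInjective_symm e.injective s).symm
  rw [h1, h2, M.famOf_apply, M.famOf_apply, hg]

lemma sum_famOf_empty {A : Type u} [IsEmpty A] (lab : A → H) (e : A ↪ ι) :
    M.sum (M.famOf lab e) = M.zero := by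
  have h : M.famOf lab e = fun _ => M.zero := by
    funext i
    exact M.famOf_not_mem lab e i (by rintro ⟨a, -⟩; exact IsEmpty.false a)
  rw [h, M.sum_const_zero]

lemma sum_famOf_punit (c : H) (e : PUnit.{u + 1} ↪ ι) :
    M.sum (M.famOf (fun _ => c) e) = c := by
  rw [M.sum_famOf_congr (fun _ => c) (fun _ => c) e
    ⟨fun _ => M.base, fun a b _ => Subsingleton.elim a b⟩ (Equiv.refl _) (fun _ => rfl)]
  have h : M.famOf (fun _ : PUnit.{u + 1} => c)
      ⟨fun _ => M.base, fun a b _ => Subsingleton.elim a b⟩ =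
      fun i => if i = M.base then c else M.zero := by
    funext i
    by_cases hi : i = M.base
    · subst hi
      rw [if_pos rfl]
      exact M.famOf_apply _ _ PUnit.unit
    · rw [if_neg hi]
      exact M.famOf_not_mem _ _ i (by rintro ⟨a, rfl⟩; exact hi rfl)
  rw [h, M.sum_single _ (fun j hj => if_neg hj), if_pos rfl]

end KappaMonoid

end MonoidLemmas

section FreeConstruction

variable {ι B : Type u} [Infinite ι]

/-- The canonical "set of tokens" of an element of `F_κ(B)`: one token for each
"copy" of each element of the support. -/
def Tokens (x : FreeKappaCarrier ι B) : Type u :=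
  Σ b : {b : B // x.1 b ≠ 0}, Quotient.out (x.1 b.1)

lemma mk_tokens_le (x : FreeKappaCarrier ι B) :
    Cardinal.mk (Tokens x) ≤ Cardinal.mk ι := by
  have h1 : Cardinal.mk (Tokens x) =
      Cardinal.sum fun b : {b : B // x.1 b ≠ 0} => x.1 b.1 := by
    unfold Tokens
    rw [Cardinal.mk_sigma]
    exact congrArg _ (funext fun b => Cardinal.mk_out _)
  rw [h1]
  calc Cardinal.sum (fun b : {b : B // x.1 b ≠ 0} => x.1 b.1)
      ≤ Cardinal.sum (fun _ : {b : B // x.1 b ≠ 0} => Cardinal.mk ι) :=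
        Cardinal.sum_le_sum _ _ (fun b => x.2.1 b.1)
    _ = Cardinal.mk {b : B // x.1 b ≠ 0} * Cardinal.mk ι := Cardinal.sum_const' _ _
    _ ≤ Cardinal.mk ι * Cardinal.mk ι := mul_le_mul' x.2.2 le_rfl
    _ = Cardinal.mk ι := Cardinal.mul_eq_self (Cardinal.aleph0_le_mk ι)

/-- A chosen embedding of the tokens into `ι`. -/
noncomputable def tokenEmb (x : FreeKappaCarrier ι B) : Tokens x ↪ ι :=
  Classical.choice ((Cardinal.le_def _ _).mp (mk_tokens_le x))

noncomputable def freeZero : FreeKappaCarrier ι B :=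
  ⟨fun _ => 0, fun _ => zero_le, by
    refine le_trans (le_of_eq ?_) zero_le
    rw [Cardinal.mk_eq_zero_iff]
    exact ⟨fun b => b.2 rfl⟩⟩

noncomputable def freeSum (X : ι → FreeKappaCarrier ι B) : FreeKappaCarrier ι B :=
  ⟨fun b => Cardinal.sum fun i => (X i).1 b, by
    constructor
    · intro b
      calc Cardinal.sum (fun i => (X i).1 b)
          ≤ Cardinal.sum (fun _ : ι => Cardinal.mk ι) :=
            Cardinal.sum_le_sum _ _ fun i => (X i).2.1 b
        _ = Cardinal.mk ι * Cardinal.mk ι := Cardinal.sum_const' _ _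
        _ = Cardinal.mk ι := Cardinal.mul_eq_self (Cardinal.aleph0_le_mk ι)
    · have hsub : {b | Cardinal.sum (fun i => (X i).1 b) ≠ 0} ⊆
          ⋃ i, {b | (X i).1 b ≠ 0} := by
        intro b hb
        by_contra hmem
        simp only [Set.mem_iUnion, Set.mem_setOf_eq, not_exists, not_not] at hmem
        exact hb (sumZeroOfAll _ hmem)
      refine le_trans (Cardinal.mk_le_mk_of_subset hsub)
        (le_trans (Cardinal.mk_iUnion_le _) ?_)
      have hsup : ⨆ i, Cardinal.mk ↥{b | (X i).1 b ≠ 0} ≤ Cardinal.mk ι :=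
        ciSup_le' fun i => (X i).2.2
      calc Cardinal.mk ι * ⨆ i, Cardinal.mk ↥{b | (X i).1 b ≠ 0}
          ≤ Cardinal.mk ι * Cardinal.mk ι := mul_le_mul' le_rfl hsup
        _ = Cardinal.mk ι := Cardinal.mul_eq_self (Cardinal.aleph0_le_mk ι)⟩

/-- The free κ-monoid structure. -/
noncomputable def FreeF (ι B : Type u) [Infinite ι] :
    KappaMonoid ι (FreeKappaCarrier ι B) where
  zero := freeZero
  base := Classical.arbitrary ι
  sum := freeSum
  sum_single X h := by
    apply Subtype.ext
    funext b
    exact cardSumSingle _ _ (fun i hi => congrArg (fun z => z.1 b) (h i hi))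
  sum_flatten x π := by
    apply Subtype.ext
    funext b
    exact cardSumFlatten (fun p => (x p).1 b) π

variable {H : Type v} (M : KappaMonoid ι H) (f : B → H)

/-- The κ-homomorphism extending `f`. -/
noncomputable def phiMap (x : FreeKappaCarrier ι B) : H :=
  M.sum (M.famOf (fun t : Tokens x => f t.1.1) (tokenEmb x))

lemma phiMap_zero : phiMap M f (freeZero : FreeKappaCarrier ι B) = M.zero := by
  haveI : IsEmpty (Tokens (freeZero : FreeKappaCarrier ι B)) := ⟨fun t => t.1.2 rfl⟩
  exact M.sum_famOf_empty _ _

lemma phiMap_incl (b : B) : phiMap M f (freeKappaIncl ι B b) = f b := by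
  set x := freeKappaIncl ι B b with hx
  have hval : x.1 b = 1 := if_pos rfl
  have houtsub : ∀ (b' : B), b' = b → Subsingleton (Quotient.out (x.1 b')) := by
    rintro b' rfl
    apply Cardinal.le_one_iff_subsingleton.mp
    rw [Cardinal.mk_out, hval]
  haveI hsub : Subsingleton (Tokens x) := by
    constructor
    rintro ⟨⟨b1, h1⟩, a1⟩ ⟨⟨b2, h2⟩, a2⟩
    have hb1 : b1 = b := by by_contra hne; exact h1 (if_neg hne)
    have hb2 : b2 = b := by by_contra hne; exact h2 (if_neg hne)
    have hb12 : b1 = b2 := hb1.trans hb2.symm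
    subst hb12
    haveI := houtsub b1 hb1
    exact congrArg (Sigma.mk _) (Subsingleton.elim a1 a2)
  haveI hne : Nonempty (Tokens x) := by
    have h0 : x.1 b ≠ 0 := by rw [hval]; exact one_ne_zero
    have : Nonempty (Quotient.out (x.1 b)) := by
      rw [← Cardinal.mk_ne_zero_iff, Cardinal.mk_out]; exact h0
    exact ⟨⟨⟨b, h0⟩, Classical.arbitrary _⟩⟩
  haveI : Unique (Tokens x) := uniqueOfSubsingleton (Classical.arbitrary _)
  have hlab : ∀ t : Tokens x, (fun _ : PUnit.{u + 1} => f b) (Equiv.equivPUnit.{u + 1, u + 1} (Tokens x) t) = f t.1.1 := by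
    rintro ⟨⟨b1, h1⟩, a1⟩
    have hb1 : b1 = b := by by_contra hne; exact h1 (if_neg hne)
    subst hb1
    rfl
  rw [phiMap, M.sum_famOf_congr (fun t : Tokens x => f t.1.1) (fun _ : PUnit.{u + 1} => f b)
    (tokenEmb x) ⟨fun _ => Classical.arbitrary ι, fun a b _ => Subsingleton.elim a b⟩
    (Equiv.equivPUnit.{u + 1, u + 1} (Tokens x)) hlab]
  exact M.sum_famOf_punit _ _

/-- The per-coordinate equivalence used to combine a κ-indexed sum. -/
noncomputable def coordEquiv (X : ι → FreeKappaCarrier ι B) (b : B) :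
    (Σ i : ι, Quotient.out ((X i).1 b)) ≃ Quotient.out ((freeSum X).1 b) := by
  apply Classical.choice
  rw [← Cardinal.eq, Cardinal.mk_sigma, Cardinal.mk_out]
  exact congrArg _ (funext fun i => Cardinal.mk_out _)

lemma out_isEmpty {c : Cardinal.{u}} (h : c = 0) : IsEmpty (Quotient.out c) :=
  Cardinal.mk_eq_zero_iff.mp (by rw [Cardinal.mk_out]; exact h)

/-- The combined token equivalence. -/
noncomputable def tokensSumEquiv (X : ι → FreeKappaCarrier ι B) :
    (Σ i : ι, Tokens (X i)) ≃ Tokens (freeSum X) :=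
  ((Equiv.sigmaCongrRight fun i =>
      sigmaSubtypeEquiv (fun b => (X i).1 b ≠ 0) (fun b => Quotient.out ((X i).1 b))
        (fun b hb => out_isEmpty (not_not.mp hb))).trans
    ((mySigmaComm fun i b => Quotient.out ((X i).1 b)).trans
      (Equiv.sigmaCongrRight fun b => coordEquiv X b))).trans
    (sigmaSubtypeEquiv (fun b => (freeSum X).1 b ≠ 0)
      (fun b => Quotient.out ((freeSum X).1 b))
      (fun b hb => out_isEmpty (not_not.mp hb))).symm

lemma tokensSumEquiv_label (X : ι → FreeKappaCarrier ι B) (a : Σ i : ι, Tokens (X i)) :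
    ((tokensSumEquiv X a).1 : {b : B // (freeSum X).1 b ≠ 0}).1 = a.2.1.1 := by
  rcases a with ⟨i, ⟨⟨b, hb⟩, v⟩⟩
  rfl

lemma phiMap_sum (X : ι → FreeKappaCarrier ι B) :
    phiMap M f (freeSum X) = M.sum fun i => phiMap M f (X i) := by
  obtain ⟨π⟩ := prodSelfEquiv ι
  let A : Type u := Σ i : ι, Tokens (X i)
  let e'' : A ↪ ι := ⟨fun a => π (a.1, tokenEmb (X a.1) a.2), by
    rintro ⟨i, t⟩ ⟨i', t'⟩ h
    have h2 : (i, (tokenEmb (X i) t : ι)) = (i', (tokenEmb (X i') t' : ι)) := π.injective h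
    obtain ⟨h3, h4⟩ := Prod.mk.injEq .. ▸ h2
    subst h3
    exact congrArg _ ((tokenEmb (X i)).injective h4)⟩
  have step1 : M.sum (fun i => phiMap M f (X i)) =
      M.sum (M.famOf (fun a : A => f a.2.1.1) e'') := by
    have hA2 := M.sum_flatten (fun p : ι × ι =>
      M.famOf (fun t : Tokens (X p.1) => f t.1.1) (tokenEmb (X p.1)) p.2) π
    rw [show (fun i => phiMap M f (X i)) = (fun i => M.sum fun j =>
      (fun p : ι × ι => M.famOf (fun t : Tokens (X p.1) => f t.1.1)
        (tokenEmb (X p.1)) p.2) (i, j)) from rfl, hA2]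
    congr 1
    funext k
    by_cases hk : ∃ t : Tokens (X (π.symm k).1), (tokenEmb (X (π.symm k).1) t : ι) = (π.symm k).2
    · obtain ⟨t, ht⟩ := hk
      have hk2 : e'' ⟨(π.symm k).1, t⟩ = k := by
        show π ((π.symm k).1, (tokenEmb (X (π.symm k).1) t : ι)) = k
        rw [ht]
        exact π.apply_symm_apply k
      calc (fun p : ι × ι => M.famOf (fun t : Tokens (X p.1) => f t.1.1)
            (tokenEmb (X p.1)) p.2) (π.symm k)
          = M.famOf (fun t : Tokens (X (π.symm k).1) => f t.1.1)
              (tokenEmb (X (π.symm k).1)) (tokenEmb (X (π.symm k).1) t) := by rw [ht]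
        _ = f t.1.1 := M.famOf_apply _ _ t
        _ = M.famOf (fun a : A => f a.2.1.1) e'' (e'' ⟨(π.symm k).1, t⟩) :=
            (M.famOf_apply (fun a : A => f a.2.1.1) e'' ⟨(π.symm k).1, t⟩).symm
        _ = M.famOf (fun a : A => f a.2.1.1) e'' k := by rw [hk2]
    · have h5 : (π.symm k).2 ∉ Set.range (tokenEmb (X (π.symm k).1)) := by
        rintro ⟨t, ht⟩; exact hk ⟨t, ht⟩
      have h6 : k ∉ Set.range e'' := by
        rintro ⟨⟨i, t⟩, hit⟩
        have h7 : π.symm k = (i, (tokenEmb (X i) t : ι)) := by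
          rw [← hit]; exact π.symm_apply_apply _
        have h8 : i = (π.symm k).1 := (congrArg Prod.fst h7).symm
        subst h8
        exact hk ⟨t, (congrArg Prod.snd h7).symm⟩
      rw [M.famOf_not_mem _ _ _ h6]
      exact M.famOf_not_mem _ _ _ h5
  have step2 : M.sum (M.famOf (fun a : A => f a.2.1.1) e'') = phiMap M f (freeSum X) := by
    exact M.sum_famOf_congr _ _ e'' (tokenEmb (freeSum X)) (tokensSumEquiv X)
      (fun a => congrArg f (tokensSumEquiv_label X a))
  rw [step1, step2]

end FreeConstruction

section Decomposition

variable {ι B : Type u} [Infinite ι]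

/-- Tokens with a fixed label `b` are the same as the `b`-th fiber. -/
noncomputable def fiberEquiv (x : FreeKappaCarrier ι B) (b : B) (hb : x.1 b ≠ 0) :
    {t : Tokens x // t.1.1 = b} ≃ Quotient.out (x.1 b) where
  toFun t := t.2 ▸ t.1.2
  invFun a := ⟨⟨⟨b, hb⟩, a⟩, rfl⟩
  left_inv := by
    rintro ⟨⟨⟨b', hb'⟩, a⟩, h⟩
    dsimp only at h
    subst h
    rfl
  right_inv a := rfl

noncomputable def rangeFiberEquiv (x : FreeKappaCarrier ι B) (b : B) :
    {i : ι // ∃ t : Tokens x, (tokenEmb x t : ι) = i ∧ t.1.1 = b} ≃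
      {t : Tokens x // t.1.1 = b} where
  toFun i := ⟨Classical.choose i.2, (Classical.choose_spec i.2).2⟩
  invFun t := ⟨tokenEmb x t.1, ⟨t.1, rfl, t.2⟩⟩
  left_inv i := Subtype.ext (Classical.choose_spec i.2).1
  right_inv := by
    rintro ⟨t, ht⟩
    apply Subtype.ext
    exact (tokenEmb x).injective
      (Classical.choose_spec (⟨t, rfl, ht⟩ : ∃ t' : Tokens x,
        (tokenEmb x t' : ι) = tokenEmb x t ∧ t'.1.1 = b)).1

lemma mk_range_fiber (x : FreeKappaCarrier ι B) (b : B) :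
    Cardinal.mk {i : ι // ∃ t : Tokens x, (tokenEmb x t : ι) = i ∧ t.1.1 = b} = x.1 b := by
  by_cases hb : x.1 b = 0
  · rw [hb, Cardinal.mk_eq_zero_iff]
    exact ⟨fun i => by
      obtain ⟨t, -, ht⟩ := i.2
      exact (ht ▸ t.1.2) hb⟩
  · rw [Cardinal.mk_congr ((rangeFiberEquiv x b).trans (fiberEquiv x b hb)), Cardinal.mk_out]

lemma decomp (x : FreeKappaCarrier ι B) :
    freeSum ((FreeF ι B).famOf
      (fun t : Tokens x => freeKappaIncl ι B t.1.1) (tokenEmb x)) = x := by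
  apply Subtype.ext
  funext b
  show Cardinal.sum (fun i => ((FreeF ι B).famOf
      (fun t : Tokens x => freeKappaIncl ι B t.1.1) (tokenEmb x) i).1 b) = x.1 b
  have hval : ∀ i, ((FreeF ι B).famOf
      (fun t : Tokens x => freeKappaIncl ι B t.1.1) (tokenEmb x) i).1 b =
      if (∃ t : Tokens x, (tokenEmb x t : ι) = i ∧ t.1.1 = b) then (1 : Cardinal.{u}) else 0 := by
    intro i
    by_cases hi : ∃ t : Tokens x, (tokenEmb x t : ι) = i
    · obtain ⟨t, rfl⟩ := hi
      rw [(FreeF ι B).famOf_apply (fun t : Tokens x => freeKappaIncl ι B t.1.1) (tokenEmb x) t]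
      by_cases hb : t.1.1 = b
      · rw [if_pos ⟨t, rfl, hb⟩]
        show (if b = t.1.1 then (1 : Cardinal.{u}) else 0) = 1
        rw [if_pos hb.symm]
      · rw [if_neg ?_]
        · show (if b = t.1.1 then (1 : Cardinal.{u}) else 0) = 0
          rw [if_neg (fun h => hb h.symm)]
        · rintro ⟨t', ht', hb'⟩
          cases (tokenEmb x).injective ht'
          exact hb hb'
    · rw [show (FreeF ι B).famOf (fun t : Tokens x => freeKappaIncl ι B t.1.1)
          (tokenEmb x) i = (FreeF ι B).zero from
            (FreeF ι B).famOf_not_mem _ _ i (fun ⟨t, ht⟩ => hi ⟨t, ht⟩)]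
      rw [if_neg (fun ⟨t, ht, _⟩ => hi ⟨t, ht⟩)]
      rfl
  calc Cardinal.sum (fun i => ((FreeF ι B).famOf
        (fun t : Tokens x => freeKappaIncl ι B t.1.1) (tokenEmb x) i).1 b)
      = Cardinal.sum (fun i =>
          if (∃ t : Tokens x, (tokenEmb x t : ι) = i ∧ t.1.1 = b)
          then (1 : Cardinal.{u}) else 0) := congrArg _ (funext hval)
    _ = Cardinal.mk {i : ι // ∃ t : Tokens x, (tokenEmb x t : ι) = i ∧ t.1.1 = b} :=
        cardSumIndicator _
    _ = x.1 b := mk_range_fiber x b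

end Decomposition

/-- Proposition 2.11: `F_κ(B)`, with coordinatewise cardinal summation, is the free
κ-monoid on `B`: for every κ-monoid `H` and map `f : B → H` there is a unique
κ-homomorphism `F_κ(B) → H` extending `f` along the canonical embedding. -/
theorem freeKappaMonoid_universal (ι B : Type u) [Infinite ι] :
    ∃ F : KappaMonoid ι (FreeKappaCarrier ι B),
      F.zero.1 = (fun _ => 0) ∧
      (∀ (x : ι → FreeKappaCarrier ι B) (b : B),
        (F.sum x).1 b = Cardinal.sum fun i => (x i).1 b) ∧
      ∀ (H : Type w) (M : KappaMonoid ι H) (f : B → H),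
        ∃! φ : FreeKappaCarrier ι B → H,
          IsKappaHom F M φ ∧ ∀ b, φ (freeKappaIncl ι B b) = f b := by
  refine ⟨FreeF ι B, rfl, fun X b => rfl, ?_⟩
  intro H M f
  refine ⟨phiMap M f, ⟨⟨phiMap_zero M f, phiMap_sum M f⟩, phiMap_incl M f⟩, ?_⟩
  rintro ψ ⟨⟨hz, hs⟩, hincl⟩
  funext x
  set Xf : ι → FreeKappaCarrier ι B :=
    (FreeF ι B).famOf (fun t : Tokens x => freeKappaIncl ι B t.1.1) (tokenEmb x) with hXfdef
  have hXf : ∀ i, ψ (Xf i) = phiMap M f (Xf i) := by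
    intro i
    by_cases hi : ∃ t : Tokens x, (tokenEmb x t : ι) = i
    · obtain ⟨t, rfl⟩ := hi
      rw [show Xf (tokenEmb x t) = freeKappaIncl ι B t.1.1 from
        (FreeF ι B).famOf_apply _ _ t]
      rw [hincl, phiMap_incl]
    · rw [show Xf i = (FreeF ι B).zero from
        (FreeF ι B).famOf_not_mem _ _ i (fun ⟨t, ht⟩ => hi ⟨t, ht⟩)]
      rw [hz]
      exact (phiMap_zero M f).symm
  have h1 : x = (FreeF ι B).sum Xf := (decomp x).symm
  calc ψ x = ψ ((FreeF ι B).sum Xf) := by rw [← h1]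
    _ = M.sum (fun i => ψ (Xf i)) := hs Xf
    _ = M.sum (fun i => phiMap M f (Xf i)) := congrArg M.sum (funext hXf)
    _ = phiMap M f ((FreeF ι B).sum Xf) := (phiMap_sum M f Xf).symm
    _ = phiMap M f x := by rw [← h1]
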